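/- Let G be a bipartite graph with parts of sizes at most n each and with at least c·n² edges, where c > 0 and n is sufficiently large. Then G contains at least c'·n⁴ copies of K_{2,2} (i.e., quadruples (y₁,y₂,z₁,z₂) with all four edges present), for some constant c' > 0 depending only on c. -/

import Mathlib

open Finset

set_option maxHeartbeats 1000000 in
/-- Erdős–Simonovits, `t = 2` case, bipartite form: for every
`c > 0` there is `c' > 0` such that for all sufficiently large `n`, every
bipartite graph with parts of size at most `n` and at least `c·n²` edges
contains at least `c'·n⁴` (ordered) copies of `K_{2,2}`. -/
theorem stmt_13 (c : ℝ) (hc : 0 < c) :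
    ∃ c' : ℝ, 0 < c' ∧ ∃ N : ℕ, ∀ n : ℕ, N ≤ n →
      ∀ (α β : Type) [DecidableEq α] [DecidableEq β]
        (Adj : α → β → Prop) [∀ a b, Decidable (Adj a b)]
        (Y : Finset α) (Z : Finset β),
        Y.card ≤ n → Z.card ≤ n →
        c * (n : ℝ) ^ 2 ≤ (((Y ×ˢ Z).filter (fun p => Adj p.1 p.2)).card : ℝ) →
        c' * (n : ℝ) ^ 4 ≤
          ((((Y ×ˢ Y) ×ˢ (Z ×ˢ Z)).filter
            (fun q => q.1.1 ≠ q.1.2 ∧ q.2.1 ≠ q.2.2 ∧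
              Adj q.1.1 q.2.1 ∧ Adj q.1.1 q.2.2 ∧
              Adj q.1.2 q.2.1 ∧ Adj q.1.2 q.2.2)).card : ℝ) := by
  refine ⟨c ^ 4 / 2, by positivity, ⌈4 / c ^ 4⌉₊ + 1, ?_⟩
  intro n hn α β _ _ Adj _ Y Z hY hZ hE
  have hn1 : 1 ≤ n := le_trans (Nat.le_add_left 1 _) hn
  have hnR : (1 : ℝ) ≤ (n : ℝ) := by exact_mod_cast hn1
  have hn0 : (0 : ℝ) < (n : ℝ) := lt_of_lt_of_le one_pos hnR
  have hn4 : 4 / c ^ 4 ≤ (n : ℝ) := by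
    refine le_trans (Nat.le_ceil _) ?_
    exact_mod_cast Nat.le_of_succ_le hn
  have hc4 : (0 : ℝ) < c ^ 4 := by positivity
  have h4 : (4 : ℝ) ≤ c ^ 4 * n := by
    rw [div_le_iff₀ hc4] at hn4; linarith [hn4]
  have hYR : (Y.card : ℝ) ≤ n := by exact_mod_cast hY
  have hZR : (Z.card : ℝ) ≤ n := by exact_mod_cast hZ
  -- indicator function
  set e : α → β → ℝ := fun y z => if Adj y z then 1 else 0 with he
  have he_nonneg : ∀ y z, 0 ≤ e y z := by intro y z; simp only [he]; positivity
  set d : β → ℝ := fun z => ∑ y ∈ Y, e y z with hd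
  set cod : α → α → ℝ := fun y1 y2 => ∑ z ∈ Z, e y1 z * e y2 z with hcod
  have hd_nonneg : ∀ z, 0 ≤ d z := fun z => Finset.sum_nonneg fun y _ => he_nonneg y z
  have hcod_nonneg : ∀ y1 y2, 0 ≤ cod y1 y2 := fun y1 y2 =>
    Finset.sum_nonneg fun z _ => mul_nonneg (he_nonneg y1 z) (he_nonneg y2 z)
  -- edge count
  have hEcount : (((Y ×ˢ Z).filter (fun p => Adj p.1 p.2)).card : ℝ) = ∑ z ∈ Z, d z := by
    simp only [hd, he]
    rw [Finset.card_filter]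
    push_cast
    rw [Finset.sum_product, Finset.sum_comm]
  have hA : c * (n : ℝ) ^ 2 ≤ ∑ z ∈ Z, d z := hEcount ▸ hE
  have hA0 : (0 : ℝ) ≤ ∑ z ∈ Z, d z := Finset.sum_nonneg fun z _ => hd_nonneg z
  -- first Cauchy–Schwarz: paths
  have hCS1 : (∑ z ∈ Z, d z) ^ 2 ≤ (Z.card : ℝ) * ∑ z ∈ Z, d z ^ 2 := by
    exact_mod_cast sq_sum_le_card_mul_sum_sq (s := Z) (f := d)
  have hT0 : (0 : ℝ) ≤ ∑ z ∈ Z, d z ^ 2 := Finset.sum_nonneg fun z _ => sq_nonneg _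
  have hT : c ^ 2 * (n : ℝ) ^ 3 ≤ ∑ z ∈ Z, d z ^ 2 := by
    have h1 : c ^ 2 * (n : ℝ) ^ 4 ≤ (∑ z ∈ Z, d z) ^ 2 := by
      have := mul_self_le_mul_self (by positivity : (0:ℝ) ≤ c * (n:ℝ) ^ 2) hA
      nlinarith [this]
    have h2 : (n : ℝ) * (c ^ 2 * (n : ℝ) ^ 3) ≤ (n : ℝ) * ∑ z ∈ Z, d z ^ 2 := by
      nlinarith [mul_le_mul_of_nonneg_right hZR hT0]
    exact le_of_mul_le_mul_left h2 hn0
  -- codegree sum identity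
  have hS : ∑ p ∈ Y ×ˢ Y, cod p.1 p.2 = ∑ z ∈ Z, d z ^ 2 := by
    simp only [hcod, hd]
    rw [Finset.sum_product]
    simp_rw [sq, Finset.sum_mul_sum]
    calc ∑ y1 ∈ Y, ∑ y2 ∈ Y, ∑ z ∈ Z, e y1 z * e y2 z
        = ∑ y1 ∈ Y, ∑ z ∈ Z, ∑ y2 ∈ Y, e y1 z * e y2 z :=
          Finset.sum_congr rfl fun _ _ => Finset.sum_comm
      _ = ∑ z ∈ Z, ∑ y1 ∈ Y, ∑ y2 ∈ Y, e y1 z * e y2 z := Finset.sum_comm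
  have hS' : c ^ 2 * (n : ℝ) ^ 3 ≤ ∑ p ∈ Y ×ˢ Y, cod p.1 p.2 := hS ▸ hT
  have hS0 : (0 : ℝ) ≤ ∑ p ∈ Y ×ˢ Y, cod p.1 p.2 :=
    Finset.sum_nonneg fun p _ => hcod_nonneg p.1 p.2
  -- second Cauchy–Schwarz
  have hQ0 : (0 : ℝ) ≤ ∑ p ∈ Y ×ˢ Y, cod p.1 p.2 ^ 2 :=
    Finset.sum_nonneg fun p _ => sq_nonneg _
  have hCS2 : (∑ p ∈ Y ×ˢ Y, cod p.1 p.2) ^ 2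
      ≤ ((Y ×ˢ Y).card : ℝ) * ∑ p ∈ Y ×ˢ Y, cod p.1 p.2 ^ 2 := by
    exact_mod_cast sq_sum_le_card_mul_sum_sq (s := Y ×ˢ Y) (f := fun p => cod p.1 p.2)
  have hYY : ((Y ×ˢ Y).card : ℝ) ≤ (n : ℝ) ^ 2 := by
    rw [Finset.card_product]; push_cast; nlinarith
  have hQ : c ^ 4 * (n : ℝ) ^ 4 ≤ ∑ p ∈ Y ×ˢ Y, cod p.1 p.2 ^ 2 := by
    have h1 : c ^ 4 * (n : ℝ) ^ 6 ≤ (∑ p ∈ Y ×ˢ Y, cod p.1 p.2) ^ 2 := by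
      have := mul_self_le_mul_self (by positivity : (0:ℝ) ≤ c ^ 2 * (n:ℝ) ^ 3) hS'
      nlinarith [this]
    have h2 : (n : ℝ) ^ 2 * (c ^ 4 * (n : ℝ) ^ 4)
        ≤ (n : ℝ) ^ 2 * ∑ p ∈ Y ×ˢ Y, cod p.1 p.2 ^ 2 := by
      nlinarith [mul_le_mul_of_nonneg_right hYY hQ0]
    exact le_of_mul_le_mul_left h2 (by positivity)
  -- quadruple count identity
  have hQcount : ((((Y ×ˢ Y) ×ˢ (Z ×ˢ Z)).filter
      (fun q => Adj q.1.1 q.2.1 ∧ Adj q.1.1 q.2.2 ∧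
        Adj q.1.2 q.2.1 ∧ Adj q.1.2 q.2.2)).card : ℝ)
      = ∑ p ∈ Y ×ˢ Y, cod p.1 p.2 ^ 2 := by
    simp only [hcod, he]
    rw [Finset.card_filter]
    push_cast
    rw [Finset.sum_product]
    refine Finset.sum_congr rfl fun p hp => ?_
    rw [sq, Finset.sum_mul_sum, Finset.sum_product]
    refine Finset.sum_congr rfl fun z1 _ => Finset.sum_congr rfl fun z2 _ => ?_
    by_cases h1 : Adj p.1 z1 <;> by_cases h2 : Adj p.1 z2 <;>
      by_cases h3 : Adj p.2 z1 <;> by_cases h4 : Adj p.2 z2 <;> simp [*]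
  -- degenerate quadruples
  set S4 := (Y ×ˢ Y) ×ˢ (Z ×ˢ Z) with hS4
  set P0 : (α × α) × β × β → Prop := fun q => Adj q.1.1 q.2.1 ∧ Adj q.1.1 q.2.2 ∧
      Adj q.1.2 q.2.1 ∧ Adj q.1.2 q.2.2 with hP0
  have hsub : S4.filter P0 ⊆
      (S4.filter (fun q => q.1.1 ≠ q.1.2 ∧ q.2.1 ≠ q.2.2 ∧
          Adj q.1.1 q.2.1 ∧ Adj q.1.1 q.2.2 ∧ Adj q.1.2 q.2.1 ∧ Adj q.1.2 q.2.2))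
        ∪ S4.filter (fun q => q.1.1 = q.1.2 ∧ P0 q)
        ∪ S4.filter (fun q => q.2.1 = q.2.2 ∧ P0 q) := by
    intro q hq
    simp only [Finset.mem_union, Finset.mem_filter, hP0] at *
    by_cases h1 : q.1.1 = q.1.2 <;> by_cases h2 : q.2.1 = q.2.2 <;> tauto
  have hD1 : (S4.filter (fun q => q.1.1 = q.1.2 ∧ P0 q)).card ≤ n * (n * n) := by
    calc (S4.filter (fun q => q.1.1 = q.1.2 ∧ P0 q)).card
        ≤ (Y ×ˢ (Z ×ˢ Z)).card := by
          refine Finset.card_le_card_of_injOn (fun q => (q.1.1, q.2)) ?_ ?_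
          · intro q hq
            simp only [Finset.mem_coe, Finset.mem_filter, hS4, Finset.mem_product] at hq ⊢
            exact ⟨hq.1.1.1, hq.1.2⟩
          · intro a ha b hb hab
            simp only [Finset.coe_filter, Set.mem_setOf_eq] at ha hb
            rcases a with ⟨⟨a1, a2⟩, az⟩
            rcases b with ⟨⟨b1, b2⟩, bz⟩
            simp only [Prod.mk.injEq] at hab ⊢
            obtain ⟨ha1, -⟩ := ha.2
            obtain ⟨hb1, -⟩ := hb.2
            simp_all
      _ = Y.card * (Z.card * Z.card) := by simp [Finset.card_product]
      _ ≤ n * (n * n) := Nat.mul_le_mul hY (Nat.mul_le_mul hZ hZ)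
  have hD2 : (S4.filter (fun q => q.2.1 = q.2.2 ∧ P0 q)).card ≤ n * n * n := by
    calc (S4.filter (fun q => q.2.1 = q.2.2 ∧ P0 q)).card
        ≤ ((Y ×ˢ Y) ×ˢ Z).card := by
          refine Finset.card_le_card_of_injOn (fun q => (q.1, q.2.1)) ?_ ?_
          · intro q hq
            simp only [Finset.mem_coe, Finset.mem_filter, hS4, Finset.mem_product] at hq ⊢
            exact ⟨hq.1.1, hq.1.2.1⟩
          · intro a ha b hb hab
            simp only [Finset.coe_filter, Set.mem_setOf_eq] at ha hb
            rcases a with ⟨⟨a1, a2⟩, az1, az2⟩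
            rcases b with ⟨⟨b1, b2⟩, bz1, bz2⟩
            simp only [Prod.mk.injEq] at hab ⊢
            obtain ⟨ha1, -⟩ := ha.2
            obtain ⟨hb1, -⟩ := hb.2
            simp_all
      _ = Y.card * Y.card * Z.card := by simp [Finset.card_product]
      _ ≤ n * n * n := Nat.mul_le_mul (Nat.mul_le_mul hY hY) hZ
  have hsplit : (S4.filter P0).card ≤
      (S4.filter (fun q => q.1.1 ≠ q.1.2 ∧ q.2.1 ≠ q.2.2 ∧
          Adj q.1.1 q.2.1 ∧ Adj q.1.1 q.2.2 ∧ Adj q.1.2 q.2.1 ∧ Adj q.1.2 q.2.2)).card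
        + n * (n * n) + n * n * n := by
    refine le_trans (Finset.card_le_card hsub) ?_
    refine le_trans (Finset.card_union_le _ _) ?_
    refine add_le_add (le_trans (Finset.card_union_le _ _) (add_le_add le_rfl hD1)) hD2
  have hsplitR : ((S4.filter P0).card : ℝ) ≤
      ((S4.filter (fun q => q.1.1 ≠ q.1.2 ∧ q.2.1 ≠ q.2.2 ∧
          Adj q.1.1 q.2.1 ∧ Adj q.1.1 q.2.2 ∧ Adj q.1.2 q.2.1 ∧ Adj q.1.2 q.2.2)).card : ℝ)
        + (n : ℝ) ^ 3 + (n : ℝ) ^ 3 := by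
    have h := (Nat.cast_le (α := ℝ)).mpr hsplit
    push_cast at h
    nlinarith [h]
  have hQR : c ^ 4 * (n : ℝ) ^ 4 ≤ ((S4.filter P0).card : ℝ) :=
    le_of_le_of_eq hQ hQcount.symm
  nlinarith [hsplitR, hQR, mul_nonneg (sub_nonneg.2 h4) (le_of_lt (pow_pos hn0 3)),
    pow_pos hn0 3]
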